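/- For random variables X, Y, W, U on finite alphabets, and any conditional probability mass functions q1(w) and q2(u | w, y) that are positive on the support of the respective true distributions, I(X;W) + I(X;U | Y,W) ≤ E[ log(p(w|x)/q1(w)) + log(p(u|w,x,y)/q2(u|w,y)) ], where the expectation is over the joint law of (X,Y,W,U). -/

import Mathlib

open BigOperators Finset Real

noncomputable section

variable {X Y W U : Type*} [Fintype X] [Fintype Y] [Fintype W] [Fintype U]

/-- marginal of `X` -/
def margX (p : X → Y → W → U → ℝ) (x : X) : ℝ := ∑ y, ∑ w, ∑ u, p x y w u

/-- marginal of `(X,Y)` -/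
def margXY (p : X → Y → W → U → ℝ) (x : X) (y : Y) : ℝ := ∑ w, ∑ u, p x y w u

/-- marginal of `(X,W)` -/
def margXW (p : X → Y → W → U → ℝ) (x : X) (w : W) : ℝ := ∑ y, ∑ u, p x y w u

/-- marginal of `(X,W,U)` -/
def margXWU (p : X → Y → W → U → ℝ) (x : X) (w : W) (u : U) : ℝ := ∑ y, p x y w u

/-- marginal of `W` -/
def margW (p : X → Y → W → U → ℝ) (w : W) : ℝ := ∑ x, ∑ y, ∑ u, p x y w u

/-- marginal of `(Y,W)` -/
def margYW (p : X → Y → W → U → ℝ) (y : Y) (w : W) : ℝ := ∑ x, ∑ u, p x y w u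

/-- marginal of `(X,Y,W)` -/
def margXYW (p : X → Y → W → U → ℝ) (x : X) (y : Y) (w : W) : ℝ := ∑ u, p x y w u

/-- marginal of `(W,U)` -/
def margWU (p : X → Y → W → U → ℝ) (w : W) (u : U) : ℝ := ∑ x, ∑ y, p x y w u

/-- marginal of `(Y,W,U)` -/
def margYWU (p : X → Y → W → U → ℝ) (y : Y) (w : W) (u : U) : ℝ := ∑ x, p x y w u

/-- mutual information `I(X;W)` -/
def miXW (p : X → Y → W → U → ℝ) : ℝ :=
  ∑ x, ∑ y, ∑ w, ∑ u, p x y w u *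
    Real.log (margXW p x w / (margX p x * margW p w))

/-- mutual information `I(X;(W,U))` -/
def miXWU (p : X → Y → W → U → ℝ) : ℝ :=
  ∑ x, ∑ y, ∑ w, ∑ u, p x y w u *
    Real.log (margXWU p x w u / (margX p x * margWU p w u))

/-- conditional mutual information `I(X;U∣Y,W)` -/
def cmiXU_YW (p : X → Y → W → U → ℝ) : ℝ :=
  ∑ x, ∑ y, ∑ w, ∑ u, p x y w u *
    Real.log (margYW p y w * p x y w u / (margXYW p x y w * margYWU p y w u))

/-- conditional mutual information `I(U;X∣W)` -/
def cmiUX_W (p : X → Y → W → U → ℝ) : ℝ :=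
  ∑ x, ∑ y, ∑ w, ∑ u, p x y w u *
    Real.log (margW p w * margXWU p x w u / (margXW p x w * margWU p w u))

/-- conditional mutual information `I(U;Y∣W)` -/
def cmiUY_W (p : X → Y → W → U → ℝ) : ℝ :=
  ∑ x, ∑ y, ∑ w, ∑ u, p x y w u *
    Real.log (margW p w * margYWU p y w u / (margYW p y w * margWU p w u))

/-- Gibbs-type inequality term. -/
lemma gibbs_term (a b : ℝ) (ha : 0 ≤ a) (hb : 0 ≤ b) (hab : 0 < a → 0 < b) :
    a - b ≤ a * Real.log (a / b) := by
  rcases eq_or_lt_of_le ha with h | h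
  · simp [← h]; linarith
  · have hb' := hab h
    have hlog := Real.log_le_sub_one_of_pos (div_pos hb' h)
    have h1 : a * Real.log (b / a) ≤ a * (b / a - 1) :=
      mul_le_mul_of_nonneg_left hlog h.le
    have h2 : a * (b / a - 1) = b - a := by field_simp
    have h3 : Real.log (a / b) = -Real.log (b / a) := by
      rw [← Real.log_inv]; congr 1; rw [inv_div]
    rw [h3]; nlinarith

lemma sum_comm4_w (g : X → Y → W → U → ℝ) :
    ∑ x, ∑ y, ∑ w, ∑ u, g x y w u = ∑ w, ∑ x, ∑ y, ∑ u, g x y w u :=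
  calc ∑ x, ∑ y, ∑ w, ∑ u, g x y w u
      = ∑ x, ∑ w, ∑ y, ∑ u, g x y w u :=
        Finset.sum_congr rfl fun _ _ => Finset.sum_comm
    _ = ∑ w, ∑ x, ∑ y, ∑ u, g x y w u := Finset.sum_comm

lemma sum_comm4_x (g : X → Y → W → U → ℝ) :
    ∑ x, ∑ y, ∑ w, ∑ u, g x y w u = ∑ y, ∑ w, ∑ u, ∑ x, g x y w u :=
  calc ∑ x, ∑ y, ∑ w, ∑ u, g x y w u
      = ∑ y, ∑ x, ∑ w, ∑ u, g x y w u := Finset.sum_comm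
    _ = ∑ y, ∑ w, ∑ x, ∑ u, g x y w u :=
        Finset.sum_congr rfl fun _ _ => Finset.sum_comm
    _ = ∑ y, ∑ w, ∑ u, ∑ x, g x y w u :=
        Finset.sum_congr rfl fun _ _ => Finset.sum_congr rfl fun _ _ => Finset.sum_comm

/-- **conditional formulation variational bound.** For finite-alphabet random
variables `X, Y, W, U` and any pmfs `q1(w)` and `q2(u ∣ w, y)` positive on the support of the
corresponding true distributions,
`I(X;W) + I(X;U∣Y,W) ≤ E[ log(p(w|x)/q1(w)) + log(p(u|w,x,y)/q2(u|w,y)) ]`. -/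
theorem conditional_variational_bound (p : X → Y → W → U → ℝ)
    (q1 : W → ℝ) (q2 : U → W → Y → ℝ)
    (hp : ∀ x y w u, 0 ≤ p x y w u)
    (hsum : ∑ x, ∑ y, ∑ w, ∑ u, p x y w u = 1)
    (hq1 : ∀ w, 0 ≤ q1 w) (hq1sum : ∑ w, q1 w = 1)
    (hq1pos : ∀ w, 0 < margW p w → 0 < q1 w)
    (hq2 : ∀ u w y, 0 ≤ q2 u w y) (hq2sum : ∀ w y, ∑ u, q2 u w y = 1)
    (hq2pos : ∀ u w y, 0 < margYWU p y w u → 0 < q2 u w y) :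
    miXW p + cmiXU_YW p ≤
      ∑ x, ∑ y, ∑ w, ∑ u, p x y w u *
        (Real.log ((margXW p x w / margX p x) / q1 w) +
         Real.log ((p x y w u / margXYW p x y w) / q2 u w y)) := by
  have key : ∀ x y w u, p x y w u *
        (Real.log ((margXW p x w / margX p x) / q1 w) +
         Real.log ((p x y w u / margXYW p x y w) / q2 u w y)) =
      p x y w u * Real.log (margXW p x w / (margX p x * margW p w)) +
      p x y w u * Real.log (margYW p y w * p x y w u /
          (margXYW p x y w * margYWU p y w u)) +
      p x y w u * Real.log (margW p w / q1 w) +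
      p x y w u * Real.log (margYWU p y w u / (margYW p y w * q2 u w y)) := by
    intro x y w u
    rcases eq_or_lt_of_le (hp x y w u) with h | h
    · simp [← h]
    · have h1 : p x y w u ≤ ∑ u, p x y w u :=
        Finset.single_le_sum (fun i _ => hp x y w i) (Finset.mem_univ u)
      have h2 : ∑ u, p x y w u ≤ ∑ y, ∑ u, p x y w u :=
        Finset.single_le_sum (fun i _ => Finset.sum_nonneg fun j _ => hp x i w j)
          (Finset.mem_univ y)
      have h3 : ∑ u, p x y w u ≤ ∑ w, ∑ u, p x y w u :=
        Finset.single_le_sum (fun i _ => Finset.sum_nonneg fun j _ => hp x y i j)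
          (Finset.mem_univ w)
      have h4 : ∑ w, ∑ u, p x y w u ≤ ∑ y, ∑ w, ∑ u, p x y w u :=
        Finset.single_le_sum
          (fun i _ => Finset.sum_nonneg fun j _ => Finset.sum_nonneg fun k _ => hp x i j k)
          (Finset.mem_univ y)
      have h5 : ∑ y, ∑ u, p x y w u ≤ ∑ x, ∑ y, ∑ u, p x y w u :=
        Finset.single_le_sum
          (fun i _ => Finset.sum_nonneg fun j _ => Finset.sum_nonneg fun k _ => hp i j w k)
          (Finset.mem_univ x)
      have h6 : p x y w u ≤ ∑ x, p x y w u :=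
        Finset.single_le_sum (fun i _ => hp i y w u) (Finset.mem_univ x)
      have hXYW : 0 < margXYW p x y w := h.trans_le h1
      have hXW : 0 < margXW p x w := h.trans_le (h1.trans h2)
      have hX : 0 < margX p x := h.trans_le (h1.trans (h3.trans h4))
      have hW : 0 < margW p w := h.trans_le ((h1.trans h2).trans h5)
      have hYWU : 0 < margYWU p y w u := h.trans_le h6
      have hYW : 0 < margYW p y w := by
        have : margYWU p y w u ≤ ∑ u, margYWU p y w u :=
          Finset.single_le_sum
            (fun i _ => Finset.sum_nonneg fun j _ => hp j y w i) (Finset.mem_univ u)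
        have e : margYW p y w = ∑ u, margYWU p y w u := Finset.sum_comm
        rw [e]; exact hYWU.trans_le this
      have hq1' := hq1pos w hW
      have hq2' := hq2pos u w y hYWU
      have e1 : (margXW p x w / margX p x) / q1 w =
          (margXW p x w / (margX p x * margW p w)) * (margW p w / q1 w) := by
        field_simp
      have e2 : (p x y w u / margXYW p x y w) / q2 u w y =
          (margYW p y w * p x y w u / (margXYW p x y w * margYWU p y w u)) *
            (margYWU p y w u / (margYW p y w * q2 u w y)) := by
        field_simp
      rw [e1, e2, Real.log_mul (by positivity) (by positivity),
        Real.log_mul (by positivity) (by positivity)]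
      ring
  have hsplit : (∑ x, ∑ y, ∑ w, ∑ u, p x y w u *
        (Real.log ((margXW p x w / margX p x) / q1 w) +
         Real.log ((p x y w u / margXYW p x y w) / q2 u w y))) =
      miXW p + cmiXU_YW p +
      (∑ x, ∑ y, ∑ w, ∑ u, p x y w u * Real.log (margW p w / q1 w)) +
      (∑ x, ∑ y, ∑ w, ∑ u, p x y w u *
        Real.log (margYWU p y w u / (margYW p y w * q2 u w y))) := by
    simp only [key, miXW, cmiXU_YW, Finset.sum_add_distrib]
  rw [hsplit]
  -- first slack term
  have hS1 : (∑ x, ∑ y, ∑ w, ∑ u, p x y w u * Real.log (margW p w / q1 w)) =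
      ∑ w, margW p w * Real.log (margW p w / q1 w) := by
    rw [sum_comm4_w]
    refine Finset.sum_congr rfl fun w _ => ?_
    simp only [margW, Finset.sum_mul]
  have hMW : ∑ w, margW p w = 1 := by
    simp only [margW]; rw [← sum_comm4_w]; exact hsum
  have hS1nn : 0 ≤ ∑ x, ∑ y, ∑ w, ∑ u, p x y w u * Real.log (margW p w / q1 w) := by
    rw [hS1]
    have hb : ∑ w, (margW p w - q1 w) ≤ ∑ w, margW p w * Real.log (margW p w / q1 w) :=
      Finset.sum_le_sum fun w _ =>
        gibbs_term _ _ (Finset.sum_nonneg fun i _ =>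
          Finset.sum_nonneg fun j _ => Finset.sum_nonneg fun k _ => hp i j w k)
          (hq1 w) (hq1pos w)
    have : ∑ w, (margW p w - q1 w) = 0 := by
      rw [Finset.sum_sub_distrib, hMW, hq1sum]; ring
    linarith
  -- second slack term
  have hS2 : (∑ x, ∑ y, ∑ w, ∑ u, p x y w u *
        Real.log (margYWU p y w u / (margYW p y w * q2 u w y))) =
      ∑ y, ∑ w, ∑ u, margYWU p y w u *
        Real.log (margYWU p y w u / (margYW p y w * q2 u w y)) := by
    rw [sum_comm4_x]
    refine Finset.sum_congr rfl fun y _ => Finset.sum_congr rfl fun w _ =>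
      Finset.sum_congr rfl fun u _ => ?_
    simp only [margYWU, Finset.sum_mul]
  have hYWle : ∀ y w u, margYWU p y w u ≤ margYW p y w := by
    intro y w u
    have e : margYW p y w = ∑ u, margYWU p y w u := Finset.sum_comm
    rw [e]
    exact Finset.single_le_sum
      (fun i _ => Finset.sum_nonneg fun j _ => hp j y w i) (Finset.mem_univ u)
  have hMYWU : ∑ y, ∑ w, ∑ u, margYWU p y w u = 1 := by
    simp only [margYWU]; rw [← sum_comm4_x]; exact hsum
  have hS2nn : 0 ≤ ∑ x, ∑ y, ∑ w, ∑ u, p x y w u *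
      Real.log (margYWU p y w u / (margYW p y w * q2 u w y)) := by
    rw [hS2]
    have hb : ∑ y, ∑ w, ∑ u, (margYWU p y w u - margYW p y w * q2 u w y) ≤
        ∑ y, ∑ w, ∑ u, margYWU p y w u *
          Real.log (margYWU p y w u / (margYW p y w * q2 u w y)) := by
      refine Finset.sum_le_sum fun y _ => Finset.sum_le_sum fun w _ =>
        Finset.sum_le_sum fun u _ => ?_
      refine gibbs_term _ _
        (Finset.sum_nonneg fun i _ => hp i y w u)
        (mul_nonneg (Finset.sum_nonneg fun i _ =>
          Finset.sum_nonneg fun j _ => hp i y w j) (hq2 u w y)) ?_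
      intro hpos
      exact mul_pos (lt_of_lt_of_le hpos (hYWle y w u)) (hq2pos u w y hpos)
    have heq : ∑ y, ∑ w, ∑ u, (margYWU p y w u - margYW p y w * q2 u w y) = 0 := by
      have h2 : ∑ y, ∑ w, ∑ u, margYW p y w * q2 u w y = 1 := by
        have : ∀ y w, ∑ u, margYW p y w * q2 u w y = margYW p y w := by
          intro y w; rw [← Finset.mul_sum, hq2sum, mul_one]
        simp only [this]
        have e : ∀ y w, margYW p y w = ∑ u, margYWU p y w u := fun _ _ => Finset.sum_comm
        simp only [e]
        exact hMYWU
      simp only [Finset.sum_sub_distrib]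
      rw [hMYWU, h2]; ring
    linarith
  linarith
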